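/- Let f ∈ L¹(X, m) satisfy ∫_X f dm = 0 and ∫_X |f(x)| (d(x₀,x) + d(x,x₀)) dm(x) < ∞ for some x₀ ∈ X, and let φ : X → ℝ be a 1-Lipschitz function maximizing ∫_X f ψ dm among all 1-Lipschitz functions ψ. Then f = 0 m-almost everywhere on the set D_φ := {x ∈ X : for all y ∈ X, if (x,y) ∈ Γ_φ or (y,x) ∈ Γ_φ then y = x}. -/

import Mathlib

set_option linter.unusedSectionVars false
set_option maxHeartbeats 1600000

open MeasureTheory Metric Set

section psi
variable {X : Type*} [MetricSpace X] [Nonempty X]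

noncomputable def psiFn (d : X → X → ℝ) (φ u : X → ℝ) (ε : ℝ) (z : X) : ℝ :=
  ⨅ y, (φ y + ε * u y + d y z)

variable {d : X → X → ℝ} {φ u : X → ℝ} {ε : ℝ}

lemma psiFn_bdd (hφ : ∀ x y, φ y - φ x ≤ d x y) (hu : ∀ y, 0 ≤ u y) (hε : 0 ≤ ε) (z : X) :
    BddBelow (Set.range fun y => φ y + ε * u y + d y z) := by
  refine ⟨φ z, ?_⟩
  rintro _ ⟨y, rfl⟩
  have h1 := hφ y z
  have h2 := mul_nonneg hε (hu y)
  dsimp only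
  linarith

lemma le_psiFn (hφ : ∀ x y, φ y - φ x ≤ d x y) (hu : ∀ y, 0 ≤ u y) (hε : 0 ≤ ε) (z : X) :
    φ z ≤ psiFn d φ u ε z := by
  refine le_ciInf fun y => ?_
  have h1 := hφ y z
  have h2 := mul_nonneg hε (hu y)
  linarith

lemma psiFn_le (hd_refl : ∀ x, d x x = 0) (hφ : ∀ x y, φ y - φ x ≤ d x y) (hu : ∀ y, 0 ≤ u y)
    (hε : 0 ≤ ε) (z : X) : psiFn d φ u ε z ≤ φ z + ε * u z := by
  have := ciInf_le (psiFn_bdd hφ hu hε z) z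
  simpa [psiFn, hd_refl z] using this

lemma psiFn_lip (hd_tri : ∀ x y z, d x y ≤ d x z + d z y)
    (hφ : ∀ x y, φ y - φ x ≤ d x y) (hu : ∀ y, 0 ≤ u y) (hε : 0 ≤ ε) (a b : X) :
    psiFn d φ u ε b - psiFn d φ u ε a ≤ d a b := by
  have key : psiFn d φ u ε b - d a b ≤ psiFn d φ u ε a := by
    refine le_ciInf fun y => ?_
    have h1 : psiFn d φ u ε b ≤ φ y + ε * u y + d y b := ciInf_le (psiFn_bdd hφ hu hε b) y
    have h2 := hd_tri y b a
    linarith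
  linarith

lemma psiFn_mono (hφ : ∀ x y, φ y - φ x ≤ d x y) (hu : ∀ y, 0 ≤ u y) {ε' : ℝ}
    (hε' : 0 < ε') (hle : ε' ≤ ε) (z : X) :
    ε' * (psiFn d φ u ε z - φ z) ≤ ε * (psiFn d φ u ε' z - φ z) := by
  have hε : 0 < ε := lt_of_lt_of_le hε' hle
  have key : φ z + (ε' / ε) * (psiFn d φ u ε z - φ z) ≤ psiFn d φ u ε' z := by
    refine le_ciInf fun y => ?_
    have h1 : psiFn d φ u ε z ≤ φ y + ε * u y + d y z := ciInf_le (psiFn_bdd hφ hu hε.le z) y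
    have ha : 0 ≤ φ y - φ z + d y z := by have := hφ y z; linarith
    have hb := hu y
    have hr1 : ε' / ε ≤ 1 := (div_le_one hε).2 hle
    have hr0 : 0 < ε' / ε := div_pos hε' hε
    have h2 : (ε' / ε) * (psiFn d φ u ε z - φ z) ≤ (ε' / ε) * ((φ y - φ z + d y z) + ε * u y) := by
      apply mul_le_mul_of_nonneg_left _ hr0.le
      linarith
    have h3 : (ε' / ε) * ((φ y - φ z + d y z) + ε * u y)
        ≤ (φ y - φ z + d y z) + ε' * u y := by
      have : (ε' / ε) * (ε * u y) = ε' * u y := by field_simp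
      nlinarith [mul_le_mul_of_nonneg_right hr1 ha]
    linarith
  have := mul_le_mul_of_nonneg_left key hε.le
  have hne : ε ≠ 0 := hε.ne'
  calc ε' * (psiFn d φ u ε z - φ z) = ε * (φ z + ε / ε * (ε' / ε * (psiFn d φ u ε z - φ z)) - φ z) := by
        field_simp; ring
    _ ≤ ε * (psiFn d φ u ε' z - φ z) := by
        apply mul_le_mul_of_nonneg_left _ hε.le
        have : ε / ε = 1 := div_self hne
        rw [this]
        simp only [one_mul]
        linarith [key]
end psi

section more
variable {X : Type*} [MetricSpace X] [Nonempty X] {d : X → X → ℝ} {φ u : X → ℝ} {ε : ℝ}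

lemma psiFn_continuous (hd_tri : ∀ x y z, d x y ≤ d x z + d z y)
    (hdist : ∀ x y, dist x y = max (d x y) (d y x))
    (hφ : ∀ x y, φ y - φ x ≤ d x y) (hu : ∀ y, 0 ≤ u y) (hε : 0 ≤ ε) :
    Continuous (psiFn d φ u ε) := by
  have : LipschitzWith 1 (psiFn d φ u ε) := by
    refine LipschitzWith.of_dist_le_mul fun a b => ?_
    rw [Real.dist_eq]
    push_cast
    rw [one_mul, abs_sub_le_iff]
    constructor
    · have := psiFn_lip hd_tri hφ hu hε b a
      have h2 : d b a ≤ dist a b := by rw [hdist a b]; exact le_max_right _ _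
      linarith
    · have := psiFn_lip hd_tri hφ hu hε a b
      have h2 : d a b ≤ dist a b := by rw [hdist a b]; exact le_max_left _ _
      linarith
  exact this.continuous

lemma lipschitz_phi (hdist : ∀ x y, dist x y = max (d x y) (d y x))
    (hφ : ∀ x y, φ y - φ x ≤ d x y) : Continuous φ := by
  have : LipschitzWith 1 φ := by
    refine LipschitzWith.of_dist_le_mul fun a b => ?_
    rw [Real.dist_eq]
    push_cast
    rw [one_mul, abs_sub_le_iff]
    constructor
    · have := hφ b a
      have h2 : d b a ≤ dist a b := by rw [hdist a b]; exact le_max_right _ _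
      linarith
    · have := hφ a b
      have h2 : d a b ≤ dist a b := by rw [hdist a b]; exact le_max_left _ _
      linarith
  exact this.continuous

lemma measurableSet_D [ProperSpace X] [MeasurableSpace X] [BorelSpace X]
    (hd_cont : Continuous fun p : X × X => d p.1 p.2)
    (hdist : ∀ x y, dist x y = max (d x y) (d y x))
    (hφ : ∀ x y, φ y - φ x ≤ d x y) :
    MeasurableSet {x : X | ∀ y : X, (φ y - φ x = d x y ∨ φ x - φ y = d y x) → y = x} := by
  have hφc : Continuous φ := lipschitz_phi hdist hφ
  rw [show {x : X | ∀ y : X, (φ y - φ x = d x y ∨ φ x - φ y = d y x) → y = x}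
      = {x : X | ∃ y : X, (φ y - φ x = d x y ∨ φ x - φ y = d y x) ∧ y ≠ x}ᶜ by
    ext x
    simp only [Set.mem_compl_iff, Set.mem_setOf_eq, not_exists, not_and, not_ne_iff]]
  apply MeasurableSet.compl
  have hrw : {x : X | ∃ y : X, (φ y - φ x = d x y ∨ φ x - φ y = d y x) ∧ y ≠ x}
      = ⋃ k : ℕ, Prod.fst ''
        {p : X × X | (φ p.2 - φ p.1 = d p.1 p.2 ∨ φ p.1 - φ p.2 = d p.2 p.1)
          ∧ 1 / (k + 1 : ℝ) ≤ dist p.1 p.2} := by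
    ext x
    simp only [Set.mem_setOf_eq, Set.mem_iUnion, Set.mem_image, Prod.exists]
    constructor
    · rintro ⟨y, heq, hne⟩
      have hpos : 0 < dist x y := dist_pos.2 (Ne.symm hne)
      obtain ⟨k, hk⟩ := exists_nat_one_div_lt hpos
      exact ⟨k, x, y, ⟨heq, hk.le⟩, rfl⟩
    · rintro ⟨k, a, y, ⟨heq, hdk⟩, rfl⟩
      refine ⟨y, heq, ?_⟩
      intro h; subst h
      simp only [dist_self] at hdk
      have : (0:ℝ) < 1 / (k + 1 : ℝ) := by positivity
      linarith
  rw [hrw]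
  refine MeasurableSet.iUnion fun k => ?_
  have hclosed : IsClosed {p : X × X | (φ p.2 - φ p.1 = d p.1 p.2 ∨ φ p.1 - φ p.2 = d p.2 p.1)
      ∧ 1 / (k + 1 : ℝ) ≤ dist p.1 p.2} := by
    apply IsClosed.inter
    · apply IsClosed.union
      · exact isClosed_eq (by fun_prop) hd_cont
      · exact isClosed_eq (by fun_prop) (hd_cont.comp continuous_swap)
    · exact isClosed_le continuous_const continuous_dist
  have hsc : IsSigmaCompact (Prod.fst ''
      {p : X × X | (φ p.2 - φ p.1 = d p.1 p.2 ∨ φ p.1 - φ p.2 = d p.2 p.1)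
        ∧ 1 / (k + 1 : ℝ) ≤ dist p.1 p.2}) :=
    (IsSigmaCompact.of_isClosed_subset isSigmaCompact_univ hclosed (Set.subset_univ _)).image
      continuous_fst
  obtain ⟨K, hK, hKeq⟩ := hsc
  rw [← hKeq]
  exact MeasurableSet.iUnion fun n => (hK n).measurableSet
end more

open Filter in
lemma aux {X : Type*} [MetricSpace X] [ProperSpace X] [MeasurableSpace X] [BorelSpace X]
    (m : Measure X) (d : X → X → ℝ)
    (hd_nonneg : ∀ x y, 0 ≤ d x y)
    (hd_refl : ∀ x, d x x = 0)
    (hd_tri : ∀ x y z, d x y ≤ d x z + d z y)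
    (hdist : ∀ x y, dist x y = max (d x y) (d y x))
    (hd_cont : Continuous fun p : X × X => d p.1 p.2)
    (f : X → ℝ) (hf_meas : StronglyMeasurable f) (hf_int : Integrable f m)
    (x₀ : X) (hfd : Integrable (fun x => |f x| * (d x₀ x + d x x₀)) m)
    (φ : X → ℝ) (hφ : ∀ x y, φ y - φ x ≤ d x y)
    (hmax : ∀ ψ : X → ℝ, (∀ x y, ψ y - ψ x ≤ d x y) →
      ∫ x, f x * ψ x ∂m ≤ ∫ x, f x * φ x ∂m) :
    ∀ᵐ x ∂m, (∀ y : X, (φ y - φ x = d x y ∨ φ x - φ y = d y x) → y = x) → f x ≤ 0 := by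
  have hne : Nonempty X := ⟨x₀⟩
  have hφc : Continuous φ := lipschitz_phi hdist hφ
  by_contra hcon
  rw [ae_iff] at hcon
  have hset : {x | ¬((∀ y : X, (φ y - φ x = d x y ∨ φ x - φ y = d y x) → y = x) → f x ≤ 0)}
      = {x : X | ∀ y : X, (φ y - φ x = d x y ∨ φ x - φ y = d y x) → y = x} ∩ {x | 0 < f x} := by
    ext x
    simp only [Set.mem_setOf_eq, Set.mem_inter_iff, _root_.not_imp, not_le]
  rw [hset] at hcon
  set D := {x : X | ∀ y : X, (φ y - φ x = d x y ∨ φ x - φ y = d y x) → y = x} with hD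
  have hDmeas : MeasurableSet D := measurableSet_D hd_cont hdist hφ
  -- find n with positive measure of D ∩ {f > 1/(n+1)}
  have hsub : D ∩ {x | 0 < f x} ⊆ ⋃ n : ℕ, D ∩ {x | 1 / (n + 1 : ℝ) < f x} := by
    rintro x ⟨hxD, hxf⟩
    obtain ⟨n, hn⟩ := exists_nat_one_div_lt (show 0 < f x from hxf)
    exact Set.mem_iUnion.2 ⟨n, hxD, hn⟩
  have hexn : ∃ n : ℕ, m (D ∩ {x | 1 / (n + 1 : ℝ) < f x}) ≠ 0 := by
    by_contra hall
    push_neg at hall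
    have : m (⋃ n : ℕ, D ∩ {x | 1 / (n + 1 : ℝ) < f x}) = 0 :=
      measure_iUnion_null fun n => hall n
    exact hcon (measure_mono_null hsub this)
  obtain ⟨n, hn⟩ := hexn
  set c₀ : ℝ := 1 / (n + 1 : ℝ) with hc₀
  have hc₀pos : 0 < c₀ := by positivity
  set A := D ∩ {x | c₀ < f x} with hA
  have hAmeas : MeasurableSet A :=
    hDmeas.inter (measurableSet_lt measurable_const hf_meas.measurable)
  have hApos : 0 < m A := hn.bot_lt
  have hAfin : m A < ⊤ := by
    refine lt_of_le_of_lt (measure_mono ?_) (hf_int.measure_ge_lt_top hc₀pos)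
    rintro x ⟨_, hx⟩
    exact (show c₀ < f x from hx).le
  -- the positive mass a
  set a : ℝ := ∫ x in A, f x ∂m with ha
  have hfiA : IntegrableOn f A m := hf_int.integrableOn
  have hapos : 0 < a := by
    have h1 : c₀ * (m A).toReal ≤ a :=
      setIntegral_ge_of_const_le_real hAmeas hAfin.ne (fun x hx => le_of_lt hx.2) hfiA
    have h2 : 0 < (m A).toReal := ENNReal.toReal_pos hApos.ne' hAfin.ne
    nlinarith
  -- the finite measure μ = |f| m
  set μ : Measure X := m.withDensity (fun x => (‖f x‖₊ : ENNReal)) with hμ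
  have hμfin : IsFiniteMeasure μ := by
    constructor
    rw [hμ, withDensity_apply _ MeasurableSet.univ, Measure.restrict_univ]
    exact hf_int.2
  have hμset : ∀ S : Set X, MeasurableSet S → ∫ x in S, |f x| ∂m = (μ S).toReal := by
    intro S hS
    rw [hμ, withDensity_apply _ hS]
    have := integral_norm_eq_lintegral_enorm
      (f := f) (μ := m.restrict S) (hf_meas.aestronglyMeasurable.restrict)
    simpa [Real.norm_eq_abs, enorm_eq_nnnorm] using this
  have hq4 : (ENNReal.ofReal (a / 4)) ≠ 0 := by
    simp only [ne_eq, ENNReal.ofReal_eq_zero, not_le]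
    linarith
  -- compact K ⊆ A
  obtain ⟨K, hKA, hKcomp, hKdiff⟩ :=
    hAmeas.exists_isCompact_diff_lt (μ := μ) (measure_ne_top μ A) hq4
  have hKmeas : MeasurableSet K := hKcomp.measurableSet
  -- open U ⊇ K
  obtain ⟨U, hKU, hUopen, hUfin, hUdiff⟩ :=
    hKmeas.exists_isOpen_diff_lt (μ := μ) (measure_ne_top μ K) hq4
  -- tail: N with μ (closedBall x₀ N)ᶜ small
  have htail : ∃ N : ℕ, μ ((closedBall x₀ N)ᶜ) < ENNReal.ofReal (a / 4) := by
    have hanti : Antitone fun N : ℕ => (closedBall x₀ (N : ℝ))ᶜ := by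
      intro i j hij
      exact Set.compl_subset_compl.2 (closedBall_subset_closedBall (by exact_mod_cast hij))
    have hiinter : ⋂ N : ℕ, (closedBall x₀ (N : ℝ))ᶜ = ∅ := by
      apply Set.eq_empty_iff_forall_notMem.2
      intro x hx
      obtain ⟨N, hN⟩ := exists_nat_gt (dist x x₀)
      exact (Set.mem_iInter.1 hx N) (mem_closedBall.2 hN.le)
    have hcont := tendsto_measure_iInter_atTop (μ := μ)
      (fun N : ℕ => (measurableSet_closedBall.compl).nullMeasurableSet) hanti
      ⟨0, measure_ne_top μ _⟩
    rw [hiinter, measure_empty] at hcont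
    have hpos : (0 : ENNReal) < ENNReal.ofReal (a / 4) := hq4.bot_lt
    exact (hcont.eventually_lt_const hpos).exists
  obtain ⟨N, hNtail⟩ := htail
  -- Urysohn function: 1 on K, 0 outside U
  obtain ⟨g, hg0, hg1, hg01⟩ := exists_continuous_zero_one_of_isCompact' hKcomp
    (isClosed_compl_iff.2 hUopen)
    (Set.disjoint_left.2 fun x hxK hxU => hxU (hKU hxK))
  set u₀ : X → ℝ := fun y => g y with hu₀def
  have hu₀c : Continuous u₀ := g.continuous
  have hu₀01 : ∀ y, 0 ≤ u₀ y ∧ u₀ y ≤ 1 := fun y => ⟨(hg01 y).1, (hg01 y).2⟩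
  have hu₀K : ∀ x ∈ K, u₀ x = 1 := fun x hx => hg1 hx
  have hu₀U : ∀ y, y ∉ U → u₀ y = 0 := fun y hy => hg0 hy
  -- the cutoff at infinity
  set h : X → ℝ := fun y => min 1 (max 0 (dist y x₀ - N)) with hhdef
  have hhc : Continuous h := by
    apply Continuous.min continuous_const
    exact Continuous.max continuous_const ((continuous_id.dist continuous_const).sub
      continuous_const)
  have hh01 : ∀ y, 0 ≤ h y ∧ h y ≤ 1 := fun y =>
    ⟨le_min zero_le_one (le_max_left _ _), min_le_left _ _⟩
  have hhB : ∀ y, dist y x₀ ≤ (N : ℝ) → h y = 0 := by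
    intro y hy
    have : max 0 (dist y x₀ - N) = 0 := max_eq_left (by linarith)
    rw [hhdef]; simp only [this]
    exact min_eq_right zero_le_one
  have hhfar : ∀ y, (N : ℝ) + 1 ≤ dist y x₀ → h y = 1 := by
    intro y hy
    have h1 : max 0 (dist y x₀ - N) ≥ 1 := le_max_of_le_right (by linarith)
    rw [hhdef]
    exact min_eq_left h1
  -- the perturbation profile u
  set u : X → ℝ := fun y => max (u₀ y) (h y) with hudef
  have huc : Continuous u := hu₀c.max hhc
  have hu0 : ∀ y, 0 ≤ u y := fun y => le_trans (hu₀01 y).1 (le_max_left _ _)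
  have hu1 : ∀ y, u y ≤ 1 := fun y => max_le (hu₀01 y).2 (hh01 y).2
  have huK : ∀ x ∈ K, u x = 1 :=
    fun x hx => le_antisymm (hu1 x) (le_trans (le_of_eq (hu₀K x hx).symm) (le_max_left _ _))
  have hufar : ∀ y, (N : ℝ) + 1 ≤ dist y x₀ → 1 ≤ u y :=
    fun y hy => le_trans (le_of_eq (hhfar y hy).symm) (le_max_right _ _)
  -- the approximating sequence
  set seq : ℕ → X → ℝ :=
    fun k x => ((k : ℝ) + 1) * (psiFn d φ u (1 / ((k : ℝ) + 1)) x - φ x) with hseqdef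
  have hεpos : ∀ k : ℕ, (0:ℝ) < 1 / ((k : ℝ) + 1) := fun k => by positivity
  have hε1 : ∀ k : ℕ, (1:ℝ) / ((k : ℝ) + 1) ≤ 1 := fun k => by
    rw [div_le_one (by positivity)]; linarith [Nat.cast_nonneg (α := ℝ) k]
  have hseq_nonneg : ∀ k x, 0 ≤ seq k x := by
    intro k x
    apply mul_nonneg (by positivity)
    have := le_psiFn (d := d) (u := u) hφ hu0 (hεpos k).le x
    linarith
  have hseq_le : ∀ k x, seq k x ≤ u x := by
    intro k x
    have h1 := psiFn_le (d := d) (u := u) hd_refl hφ hu0 (hεpos k).le x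
    have h2 : ((k : ℝ) + 1) * ((1 / ((k : ℝ) + 1)) * u x) = u x := by
      field_simp
    calc seq k x ≤ ((k : ℝ) + 1) * ((1 / ((k : ℝ) + 1)) * u x) := by
          apply mul_le_mul_of_nonneg_left _ (by positivity)
          linarith
      _ = u x := h2
  have hseq_mono : ∀ x, Monotone fun k => seq k x := by
    intro x
    apply monotone_nat_of_le_succ
    intro k
    have hle : (1:ℝ) / ((k : ℝ) + 1 + 1) ≤ 1 / ((k : ℝ) + 1) := by
      apply div_le_div_of_nonneg_left one_pos.le (by positivity) (by linarith)
    have hm := psiFn_mono (d := d) (u := u) hφ hu0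
      (show (0:ℝ) < 1 / ((k : ℝ) + 1 + 1) by positivity) hle x
    simp only [hseqdef]
    push_cast
    set a1 := psiFn d φ u (1 / ((k : ℝ) + 1)) x - φ x with ha1
    set b1 := psiFn d φ u (1 / ((k : ℝ) + 1 + 1)) x - φ x with hb1
    have h3 := mul_le_mul_of_nonneg_left hm
      (show (0:ℝ) ≤ ((k : ℝ) + 1) * ((k : ℝ) + 2) by positivity)
    have e1 : ((k : ℝ) + 1) * ((k : ℝ) + 2) * ((1 / ((k : ℝ) + 1 + 1)) * a1)
        = ((k : ℝ) + 1) * a1 := by field_simp; ring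
    have e2 : ((k : ℝ) + 1) * ((k : ℝ) + 2) * ((1 / ((k : ℝ) + 1)) * b1)
        = ((k : ℝ) + 2) * b1 := by field_simp
    have egoal : ((k : ℝ) + 1 + 1) * b1 = ((k : ℝ) + 2) * b1 := by ring
    clear_value a1 b1
    rw [egoal, ← e1, ← e2]
    exact h3
  have hseq_bdd : ∀ x, BddAbove (Set.range fun k => seq k x) := by
    intro x
    refine ⟨u x, ?_⟩
    rintro _ ⟨k, rfl⟩
    exact hseq_le k x
  set v : X → ℝ := fun x => ⨆ k : ℕ, seq k x with hvdef
  have hv_le : ∀ x, v x ≤ u x := fun x => ciSup_le fun k => hseq_le k x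
  have hv_nonneg : ∀ x, 0 ≤ v x :=
    fun x => le_trans (hseq_nonneg 0 x) (le_ciSup (hseq_bdd x) 0)
  have hv_tendsto : ∀ x, Tendsto (fun k => seq k x) atTop (nhds (v x)) :=
    fun x => tendsto_atTop_ciSup (hseq_mono x) (hseq_bdd x)
  -- integrability of f * φ
  have hfφ : Integrable (fun x => f x * φ x) m := by
    apply Integrable.mono' ((hf_int.abs.mul_const |φ x₀|).add hfd)
      (hf_meas.aestronglyMeasurable.mul hφc.aestronglyMeasurable)
    apply Filter.Eventually.of_forall
    intro x
    have h1 : |φ x| ≤ |φ x₀| + (d x₀ x + d x x₀) := by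
      have a1 := hφ x₀ x
      have a2 := hφ x x₀
      have a3 := hd_nonneg x₀ x
      have a4 := hd_nonneg x x₀
      rw [abs_le]
      constructor
      · have := neg_abs_le (φ x₀); linarith
      · have := le_abs_self (φ x₀); linarith
    calc ‖f x * φ x‖ = |f x| * |φ x| := abs_mul _ _
      _ ≤ |f x| * (|φ x₀| + (d x₀ x + d x x₀)) :=
          mul_le_mul_of_nonneg_left h1 (abs_nonneg _)
      _ = |f x| * |φ x₀| + |f x| * (d x₀ x + d x x₀) := by ring
  have hψcont : ∀ k : ℕ, Continuous (psiFn d φ u (1 / ((k : ℝ) + 1))) :=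
    fun k => psiFn_continuous hd_tri hdist hφ hu0 (hεpos k).le
  have hfψ : ∀ k : ℕ, Integrable (fun x => f x * psiFn d φ u (1 / ((k : ℝ) + 1)) x) m := by
    intro k
    apply Integrable.mono' (hfφ.abs.add hf_int.abs)
      (hf_meas.aestronglyMeasurable.mul (hψcont k).aestronglyMeasurable)
    apply Filter.Eventually.of_forall
    intro x
    have h1 := le_psiFn (d := d) (u := u) hφ hu0 (hεpos k).le x
    have h2 := psiFn_le (d := d) (u := u) hd_refl hφ hu0 (hεpos k).le x
    have h3 : (1 / ((k : ℝ) + 1)) * u x ≤ 1 := by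
      calc (1 / ((k : ℝ) + 1)) * u x ≤ 1 * 1 :=
            mul_le_mul (hε1 k) (hu1 x) (hu0 x) one_pos.le
        _ = 1 := one_mul 1
    have h4 : |psiFn d φ u (1 / ((k : ℝ) + 1)) x| ≤ |φ x| + 1 := by
      rw [abs_le]
      constructor
      · have := neg_abs_le (φ x); linarith
      · have := le_abs_self (φ x); linarith
    calc ‖f x * psiFn d φ u (1 / ((k : ℝ) + 1)) x‖
        = |f x| * |psiFn d φ u (1 / ((k : ℝ) + 1)) x| := abs_mul _ _
      _ ≤ |f x| * (|φ x| + 1) := mul_le_mul_of_nonneg_left h4 (abs_nonneg _)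
      _ = |f x| * |φ x| + |f x| := by ring
      _ = |f x * φ x| + |f x| := by rw [abs_mul]
  have hseq_int : ∀ k : ℕ, Integrable (fun x => f x * seq k x) m := by
    intro k
    have heq : (fun x => f x * seq k x) = fun x =>
        ((k : ℝ) + 1) * (f x * psiFn d φ u (1 / ((k : ℝ) + 1)) x - f x * φ x) := by
      funext x
      simp only [hseqdef]
      ring
    rw [heq]
    exact (((hfψ k).sub hfφ).const_mul _)
  have hint_le : ∀ k : ℕ, ∫ x, f x * seq k x ∂m ≤ 0 := by
    intro k
    have hlip := psiFn_lip (d := d) (u := u) hd_tri hφ hu0 (hεpos k).le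
    have hm := hmax (psiFn d φ u (1 / ((k : ℝ) + 1))) (fun x y => hlip x y)
    have heq : (fun x => f x * seq k x) = fun x =>
        ((k : ℝ) + 1) * (f x * psiFn d φ u (1 / ((k : ℝ) + 1)) x - f x * φ x) := by
      funext x
      simp only [hseqdef]
      ring
    rw [heq, integral_const_mul, integral_sub (hfψ k) hfφ]
    have hd0 : ∫ x, f x * psiFn d φ u (1 / ((k : ℝ) + 1)) x ∂m - ∫ x, f x * φ x ∂m ≤ 0 := by
      linarith
    exact mul_nonpos_iff.2 (Or.inl ⟨by positivity, hd0⟩)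
  have hbound : ∀ k : ℕ, ∀ᵐ x ∂m, ‖f x * seq k x‖ ≤ |f x| := by
    intro k
    apply Filter.Eventually.of_forall
    intro x
    rw [Real.norm_eq_abs, abs_mul]
    have h1 : |seq k x| ≤ 1 := by
      rw [abs_le]
      exact ⟨by linarith [hseq_nonneg k x], le_trans (hseq_le k x) (hu1 x)⟩
    calc |f x| * |seq k x| ≤ |f x| * 1 := mul_le_mul_of_nonneg_left h1 (abs_nonneg _)
      _ = |f x| := mul_one _
  have hlim : ∀ x, Tendsto (fun k => f x * seq k x) atTop (nhds (f x * v x)) :=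
    fun x => (hv_tendsto x).const_mul (f x)
  have hDCT := tendsto_integral_of_dominated_convergence (μ := m)
    (F := fun k x => f x * seq k x) (f := fun x => f x * v x) (fun x => |f x|)
    (fun k => (hseq_int k).aestronglyMeasurable) hf_int.abs hbound
    (Filter.Eventually.of_forall hlim)
  have hvle0 : ∫ x, f x * v x ∂m ≤ 0 :=
    le_of_tendsto hDCT (Filter.Eventually.of_forall hint_le)
  have hfv_meas : AEStronglyMeasurable (fun x => f x * v x) m :=
    aestronglyMeasurable_of_tendsto_ae atTop (fun k => (hseq_int k).aestronglyMeasurable)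
      (Filter.Eventually.of_forall hlim)
  have hfv_int : Integrable (fun x => f x * v x) m := by
    apply Integrable.mono' hf_int.abs hfv_meas
    apply Filter.Eventually.of_forall
    intro x
    rw [Real.norm_eq_abs, abs_mul]
    have h1 : |v x| ≤ 1 := by
      rw [abs_le]
      exact ⟨by linarith [hv_nonneg x], le_trans (hv_le x) (hu1 x)⟩
    calc |f x| * |v x| ≤ |f x| * 1 := mul_le_mul_of_nonneg_left h1 (abs_nonneg _)
      _ = |f x| := mul_one _
  -- pointwise: v = 1 on K
  have hvK : ∀ x ∈ K, v x = 1 := by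
    intro x hxK
    have hxD : x ∈ D := (hKA hxK).1
    have hux : u x = 1 := huK x hxK
    refine le_antisymm (le_trans (hv_le x) (le_of_eq hux)) ?_
    by_contra hlt
    push_neg at hlt
    set c : ℝ := (v x + 1) / 2 with hc
    have hc1 : c < 1 := by rw [hc]; linarith
    have hcv : v x < c := by rw [hc]; linarith
    -- a ball where u > c
    have hopen : IsOpen {y : X | c < u y} := isOpen_lt continuous_const huc
    have hxmem : x ∈ {y : X | c < u y} := by
      simp only [Set.mem_setOf_eq, hux]; exact hc1
    obtain ⟨r, hrpos, hrball⟩ := Metric.isOpen_iff.1 hopen x hxmem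
    -- the compact region
    set S : Set X := {y : X | r ≤ dist x y} ∩ closedBall x₀ ((N : ℝ) + 1) with hS
    have hSclosed : IsClosed S := by
      apply IsClosed.inter
      · exact isClosed_le continuous_const (continuous_const.dist continuous_id)
      · exact isClosed_closedBall
    have hScomp : IsCompact S :=
      (isCompact_closedBall x₀ ((N : ℝ) + 1)).of_isClosed_subset hSclosed
        Set.inter_subset_right
    set F : X → ℝ := fun y => φ y - φ x + d y x with hF
    have hFcont : Continuous F := by
      apply Continuous.add (hφc.sub continuous_const)
      exact hd_cont.comp (continuous_id.prodMk continuous_const)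
    have hFnonneg : ∀ y, 0 ≤ F y := by
      intro y
      have := hφ y x
      simp only [hF]
      linarith
    obtain ⟨δ, hδpos, hδS⟩ : ∃ δ : ℝ, 0 < δ ∧ ∀ y ∈ S, δ ≤ F y := by
      rcases S.eq_empty_or_nonempty with hSe | hSne
      · exact ⟨1, one_pos, fun y hy => absurd (hSe ▸ hy) (Set.notMem_empty y)⟩
      · obtain ⟨y₀, hy₀S, hy₀min⟩ := hScomp.exists_isMinOn hSne hFcont.continuousOn
        refine ⟨F y₀, ?_, fun y hy => hy₀min hy⟩
        rcases lt_or_eq_of_le (hFnonneg y₀) with h | h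
        · exact h
        · exfalso
          have heq : φ x - φ y₀ = d y₀ x := by
            have : F y₀ = 0 := h.symm
            simp only [hF] at this
            linarith
          have : y₀ = x := hxD y₀ (Or.inr heq)
          have hr := hy₀S.1
          rw [this] at hr
          simp only [Set.mem_setOf_eq, dist_self] at hr
          linarith
    obtain ⟨k, hk⟩ := exists_nat_one_div_lt hδpos
    have hklow : φ x + (1 / ((k : ℝ) + 1)) * c ≤ psiFn d φ u (1 / ((k : ℝ) + 1)) x := by
      refine le_ciInf fun y => ?_
      have hFy := hFnonneg y
      simp only [hF] at hFy
      have hεk := hεpos k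
      by_cases h1 : dist y x < r
      · have hyball : y ∈ ball x r := mem_ball.2 h1
        have hcu : c < u y := hrball hyball
        nlinarith [mul_pos hεk (sub_pos.2 hcu)]
      · by_cases h2 : dist y x₀ ≤ (N : ℝ) + 1
        · have hyS : y ∈ S := by
            constructor
            · simp only [Set.mem_setOf_eq]
              rw [dist_comm]
              exact not_lt.1 h1
            · exact mem_closedBall.2 h2
          have hFδ := hδS y hyS
          simp only [hF] at hFδ
          have h3 : (1 / ((k : ℝ) + 1)) * c ≤ (1 / ((k : ℝ) + 1)) * 1 :=
            mul_le_mul_of_nonneg_left hc1.le hεk.le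
          have h4 := mul_nonneg hεk.le (hu0 y)
          linarith
        · have huy := hufar y (not_le.1 h2).le
          have h3 : (1 / ((k : ℝ) + 1)) * c ≤ (1 / ((k : ℝ) + 1)) * u y :=
            mul_le_mul_of_nonneg_left (le_trans hc1.le huy) hεk.le
          linarith
    have hcseq : c ≤ seq k x := by
      have h5 : ((k : ℝ) + 1) * ((1 / ((k : ℝ) + 1)) * c) = c := by field_simp
      calc c = ((k : ℝ) + 1) * ((1 / ((k : ℝ) + 1)) * c) := h5.symm
        _ ≤ ((k : ℝ) + 1) * (psiFn d φ u (1 / ((k : ℝ) + 1)) x - φ x) := by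
            apply mul_le_mul_of_nonneg_left _ (by positivity)
            linarith
        _ = seq k x := rfl
    have : c ≤ v x := le_trans hcseq (le_ciSup (hseq_bdd x) k)
    linarith
  -- final estimate
  have e0 : ∫ x in K, f x * v x ∂m + ∫ x in Kᶜ, f x * v x ∂m = ∫ x, f x * v x ∂m :=
    integral_add_compl hKmeas hfv_int
  have e1 : ∫ x in K, f x * v x ∂m = ∫ x in K, f x ∂m :=
    setIntegral_congr_fun hKmeas (fun x hx => by rw [hvK x hx, mul_one])
  have e2 : ∫ x in A \ K, |f x| ∂m ≤ a / 4 := by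
    rw [hμset _ (hAmeas.diff hKmeas)]
    exact ENNReal.toReal_le_of_le_ofReal (by linarith) hKdiff.le
  have e3 : a - a / 4 ≤ ∫ x in K, f x ∂m := by
    have hdiffint : ∫ x in A \ K, f x ∂m = ∫ x in A, f x ∂m - ∫ x in K, f x ∂m :=
      integral_diff hKmeas hfiA hKA
    have habs : |∫ x in A \ K, f x ∂m| ≤ ∫ x in A \ K, |f x| ∂m := by
      have := norm_integral_le_integral_norm (μ := m.restrict (A \ K)) f
      simpa [Real.norm_eq_abs] using this
    have := abs_le.1 habs
    rw [← ha] at hdiffint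
    linarith [e2, this.1, this.2, hdiffint]
  -- the complement bound
  set B1 : Set X := U \ K with hB1
  set B2 : Set X := (closedBall x₀ (N : ℝ))ᶜ with hB2
  have hB1meas : MeasurableSet B1 := hUopen.measurableSet.diff hKmeas
  have hB2meas : MeasurableSet B2 := measurableSet_closedBall.compl
  have hind1 : Integrable (B1.indicator fun x => |f x|) m := hf_int.abs.indicator hB1meas
  have hind2 : Integrable (B2.indicator fun x => |f x|) m := hf_int.abs.indicator hB2meas
  have hptw : ∀ x ∈ Kᶜ, -(B1.indicator (fun x => |f x|) x + B2.indicator (fun x => |f x|) x)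
      ≤ f x * v x := by
    intro x hxK
    have hxK' : x ∉ K := hxK
    have habs : |f x * v x| ≤ |f x| * u x := by
      rw [abs_mul]
      apply mul_le_mul_of_nonneg_left _ (abs_nonneg _)
      rw [abs_le]
      exact ⟨by linarith [hv_nonneg x, hu0 x], hv_le x⟩
    have hiu : |f x| * u x ≤ B1.indicator (fun x => |f x|) x + B2.indicator (fun x => |f x|) x := by
      by_cases hxB2 : x ∈ B2
      · have h1 : |f x| * u x ≤ |f x| := by
          calc |f x| * u x ≤ |f x| * 1 := mul_le_mul_of_nonneg_left (hu1 x) (abs_nonneg _)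
            _ = |f x| := mul_one _
        have h2 : B2.indicator (fun x => |f x|) x = |f x| := Set.indicator_of_mem hxB2 _
        have h3 : 0 ≤ B1.indicator (fun x => |f x|) x :=
          Set.indicator_nonneg (fun y _ => abs_nonneg (f y)) x
        linarith
      · -- x ∈ closedBall x₀ N, so h x = 0, u x = u₀ x
        have hxball : dist x x₀ ≤ (N : ℝ) := by
          have : x ∈ closedBall x₀ (N : ℝ) := not_not.1 fun hc => hxB2 hc
          exact mem_closedBall.1 this
        have hhx : h x = 0 := hhB x hxball
        have hux : u x = u₀ x := by
          rw [hudef]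
          simp only [hhx]
          exact max_eq_left (hu₀01 x).1
        have h3 : 0 ≤ B2.indicator (fun x => |f x|) x :=
          Set.indicator_nonneg (fun y _ => abs_nonneg (f y)) x
        by_cases hxU : x ∈ U
        · have hxB1 : x ∈ B1 := ⟨hxU, hxK'⟩
          have h2 : B1.indicator (fun x => |f x|) x = |f x| := Set.indicator_of_mem hxB1 _
          have h1 : |f x| * u x ≤ |f x| := by
            calc |f x| * u x ≤ |f x| * 1 := mul_le_mul_of_nonneg_left (hu1 x) (abs_nonneg _)
              _ = |f x| := mul_one _
          linarith
        · have hu₀x : u₀ x = 0 := hu₀U x hxU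
          have : u x = 0 := by rw [hux, hu₀x]
          rw [this, mul_zero]
          have h4 : 0 ≤ B1.indicator (fun x => |f x|) x :=
            Set.indicator_nonneg (fun y _ => abs_nonneg (f y)) x
          linarith
    have := neg_abs_le (f x * v x)
    linarith
  have e5 : -(∫ x in Kᶜ, (B1.indicator (fun x => |f x|) x + B2.indicator (fun x => |f x|) x) ∂m)
      ≤ ∫ x in Kᶜ, f x * v x ∂m := by
    rw [← integral_neg]
    apply setIntegral_mono_on ((hind1.add hind2).neg.integrableOn) hfv_int.integrableOn
      hKmeas.compl
    intro x hx
    simpa using hptw x hx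
  have e6 : ∫ x in Kᶜ, (B1.indicator (fun x => |f x|) x + B2.indicator (fun x => |f x|) x) ∂m
      ≤ a / 4 + a / 4 := by
    have h1 : ∫ x in Kᶜ, (B1.indicator (fun x => |f x|) x + B2.indicator (fun x => |f x|) x) ∂m
        ≤ ∫ x, (B1.indicator (fun x => |f x|) x + B2.indicator (fun x => |f x|) x) ∂m := by
      apply setIntegral_le_integral (hind1.add hind2)
      apply Filter.Eventually.of_forall
      intro x
      have h3 := Set.indicator_nonneg (fun y (_ : y ∈ B1) => abs_nonneg (f y)) x
      have h4 := Set.indicator_nonneg (fun y (_ : y ∈ B2) => abs_nonneg (f y)) x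
      simp only [Pi.zero_apply, Pi.add_apply]
      linarith
    have h2 : ∫ x, (B1.indicator (fun x => |f x|) x + B2.indicator (fun x => |f x|) x) ∂m
        = ∫ x in B1, |f x| ∂m + ∫ x in B2, |f x| ∂m := by
      rw [integral_add hind1 hind2, integral_indicator hB1meas, integral_indicator hB2meas]
    have h5 : ∫ x in B1, |f x| ∂m ≤ a / 4 := by
      rw [hμset _ hB1meas]
      exact ENNReal.toReal_le_of_le_ofReal (by linarith) hUdiff.le
    have h6 : ∫ x in B2, |f x| ∂m ≤ a / 4 := by
      rw [hμset _ hB2meas]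
      exact ENNReal.toReal_le_of_le_ofReal (by linarith) hNtail.le
    linarith
  linarith [hvle0, e0, e1, e3, e5, e6]

/-- If `φ` maximizes `∫ f ψ dm` among all 1-Lipschitz functions `ψ` (for a mean-zero,
suitably integrable `f`), then `f = 0` `m`-almost everywhere on the set `D_φ` of points
not lying on any non-degenerate transport ray. -/
theorem stmt_10 {X : Type*} [MetricSpace X] [ProperSpace X]
    [MeasurableSpace X] [BorelSpace X]
    (m : Measure X) (d : X → X → ℝ)
    (hd_nonneg : ∀ x y, 0 ≤ d x y)
    (hd_refl : ∀ x, d x x = 0)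
    (hd_tri : ∀ x y z, d x y ≤ d x z + d z y)
    (hd_pos : ∀ x y, d x y = 0 → x = y)
    (hdist : ∀ x y, dist x y = max (d x y) (d y x))
    (hd_cont : Continuous fun p : X × X => d p.1 p.2)
    (f : X → ℝ) (hf_int : Integrable f m) (hf_mean : ∫ x, f x ∂m = 0)
    (x₀ : X) (hfd : Integrable (fun x => |f x| * (d x₀ x + d x x₀)) m)
    (φ : X → ℝ) (hφ : ∀ x y, φ y - φ x ≤ d x y)
    (hmax : ∀ ψ : X → ℝ, (∀ x y, ψ y - ψ x ≤ d x y) →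
      ∫ x, f x * ψ x ∂m ≤ ∫ x, f x * φ x ∂m) :
    ∀ᵐ x ∂m,
      (∀ y : X, (φ y - φ x = d x y ∨ φ x - φ y = d y x) → y = x) → f x = 0 := by
  -- replace f by a strongly measurable representative
  set g : X → ℝ := hf_int.aestronglyMeasurable.mk f with hgdef
  have hg : StronglyMeasurable g := hf_int.aestronglyMeasurable.stronglyMeasurable_mk
  have heq : f =ᵐ[m] g := hf_int.aestronglyMeasurable.ae_eq_mk
  have hg_int : Integrable g m := hf_int.congr heq
  have hgfd : Integrable (fun x => |g x| * (d x₀ x + d x x₀)) m := by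
    apply hfd.congr
    filter_upwards [heq] with x hx
    rw [hx]
  have hgmax : ∀ ψ : X → ℝ, (∀ x y, ψ y - ψ x ≤ d x y) →
      ∫ x, g x * ψ x ∂m ≤ ∫ x, g x * φ x ∂m := by
    intro ψ hψ
    have e1 : ∫ x, g x * ψ x ∂m = ∫ x, f x * ψ x ∂m := by
      apply integral_congr_ae
      filter_upwards [heq] with x hx
      rw [hx]
    have e2 : ∫ x, g x * φ x ∂m = ∫ x, f x * φ x ∂m := by
      apply integral_congr_ae
      filter_upwards [heq] with x hx
      rw [hx]
    rw [e1, e2]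
    exact hmax ψ hψ
  -- first application: g ≤ 0 a.e. on D
  have h1 := aux m d hd_nonneg hd_refl hd_tri hdist hd_cont g hg hg_int x₀ hgfd φ hφ hgmax
  -- second application with the reversed structure
  have h2 := aux m (fun x y => d y x) (fun x y => hd_nonneg y x) hd_refl
    (fun x y z => by have := hd_tri y x z; linarith)
    (fun x y => by rw [hdist x y]; exact max_comm _ _)
    (hd_cont.comp (continuous_snd.prodMk continuous_fst))
    (fun x => -g x) hg.neg hg_int.neg x₀
    (by
      have e : (fun x => |(-g x)| * (d x x₀ + d x₀ x)) = fun x => |g x| * (d x₀ x + d x x₀) := by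
        funext x
        rw [abs_neg, add_comm]
      exact e ▸ hgfd)
    (fun x => -φ x)
    (fun x y => by show -φ y - -φ x ≤ d y x; have := hφ y x; linarith)
    (by
      intro ψ hψ
      have hψ' : ∀ x y, (-ψ y) - (-ψ x) ≤ d x y := fun x y => by have := hψ y x; linarith
      have hm := hgmax (fun x => -ψ x) hψ'
      have e1 : (fun x => -g x * ψ x) = fun x => g x * (-ψ x) := by funext x; ring
      have e2 : (fun x => -g x * -φ x) = fun x => g x * φ x := by funext x; ring
      calc ∫ x, -g x * ψ x ∂m = ∫ x, g x * (-ψ x) ∂m := by rw [e1]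
        _ ≤ ∫ x, g x * φ x ∂m := hm
        _ = ∫ x, -g x * -φ x ∂m := by rw [e2])
  filter_upwards [h1, h2, heq] with x hx1 hx2 hfg
  intro hxD
  have hd1 : g x ≤ 0 := hx1 hxD
  have hd2 : -g x ≤ 0 := by
    apply hx2
    intro y hy
    rcases hy with h | h
    · exact hxD y (Or.inr (by linarith))
    · exact hxD y (Or.inl (by linarith))
  rw [hfg]
  linarith
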